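/- arXiv:1309.5527 — 3 statements merged into one kernel-verified Lean document; each statement's English description precedes it below -/
import Mathlib

section
/- Let P be a finite uniform poset of length l with associated uniform sequence (P_0, P_1, ..., P_l), where each P_i is a finite pure poset of length i with a minimum element. Then the (l+1)×(l+1) matrices [w_{i-j}(P_i)]_{0 ≤ i,j ≤ l} and [W_{i-j}(P_i)]_{0 ≤ i,j ≤ l} (with entries interpreted as 0 when j > i) are inverse to each other. -/
open scoped Classical

section Aux

variable {X : Type*} [PartialOrder X] [Fintype X]

private lemma aux_exists_le_isMax (x : X) : ∃ m, x ≤ m ∧ IsMax m := by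
  obtain ⟨m, hm, hmax⟩ := Finset.exists_maximal
    (s := Finset.univ.filter (fun y : X => x ≤ y)) ⟨x, by simp⟩
  simp only [Finset.mem_filter, Finset.mem_univ, true_and] at hm hmax
  refine ⟨m, hm, fun b hb => ?_⟩
  exact hmax (hm.trans hb) hb

private lemma aux_rank_lt (ρX : X → ℕ) (hcov : ∀ x y : X, x ⋖ y → ρX y = ρX x + 1) :
    ∀ y x : X, x < y → ρX x < ρX y := by
  intro y
  induction y using WellFoundedLT.induction with
  | _ y ih =>
    intro x h
    obtain ⟨z, hxz, hzy⟩ := exists_le_covBy_of_lt h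
    rcases eq_or_lt_of_le hxz with rfl | h'
    · rw [hcov _ _ hzy]; omega
    · have := ih z hzy.lt x h'
      rw [hcov _ _ hzy]; omega

private lemma aux_rank_mono (ρX : X → ℕ) (hcov : ∀ x y : X, x ⋖ y → ρX y = ρX x + 1)
    {x y : X} (h : x ≤ y) : ρX x ≤ ρX y := by
  rcases eq_or_lt_of_le h with rfl | h'
  · exact le_rfl
  · exact (aux_rank_lt ρX hcov y x h').le

private lemma aux_transport {Y : Type*} [PartialOrder Y] [Fintype Y] [OrderBot X] [OrderBot Y]
    (ρX : X → ℕ) (ρY : Y → ℕ) (hbX : ρX ⊥ = 0) (hbY : ρY ⊥ = 0)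
    (hcX : ∀ x y : X, x ⋖ y → ρX y = ρX x + 1)
    (hcY : ∀ x y : Y, x ⋖ y → ρY y = ρY x + 1)
    (f : X ≃o Y) : ∀ x : X, ρY (f x) = ρX x := by
  intro x
  induction x using WellFoundedLT.induction with
  | _ x ih =>
    rcases eq_or_ne x ⊥ with rfl | hne
    · rw [f.map_bot, hbX, hbY]
    · obtain ⟨z, _, hz⟩ := exists_le_covBy_of_lt (bot_lt_iff_ne_bot.2 hne)
      have hfz : f z ⋖ f x := (apply_covBy_apply_iff f).2 hz
      rw [hcY _ _ hfz, hcX _ _ hz, ih z hz.lt]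

private lemma aux_descend [OrderBot X] (ρX : X → ℕ) (hb : ρX ⊥ = 0)
    (hcov : ∀ x y : X, x ⋖ y → ρX y = ρX x + 1) :
    ∀ (x : X) (t : ℕ), t ≤ ρX x → ∃ z, z ≤ x ∧ ρX z = t := by
  intro x
  induction x using WellFoundedLT.induction with
  | _ x ih =>
    intro t ht
    rcases eq_or_lt_of_le ht with heq | hlt
    · exact ⟨x, le_rfl, heq.symm⟩
    · have hne : x ≠ ⊥ := by rintro rfl; omega
      obtain ⟨z, _, hz⟩ := exists_le_covBy_of_lt (bot_lt_iff_ne_bot.2 hne)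
      have hzx := hcov _ _ hz
      obtain ⟨w, hw, hwt⟩ := ih z hz.lt t (by omega)
      exact ⟨w, hw.trans hz.le, hwt⟩

private lemma aux_Ici_covBy {Q : Type*} [PartialOrder Q] {q : Q} {a b : Set.Ici q}
    (h : a ⋖ b) : (a : Q) ⋖ (b : Q) := by
  show (a : Q) < (b : Q) ∧ ∀ ⦃c : Q⦄, (a : Q) < c → ¬c < (b : Q)
  refine ⟨Subtype.coe_lt_coe.2 h.1, fun c hac hcb => ?_⟩
  have hc : c ∈ Set.Ici q := le_trans a.2 hac.le
  have hac' : a < (⟨c, hc⟩ : Set.Ici q) := Subtype.mk_lt_mk.2 hac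
  have hcb' : (⟨c, hc⟩ : Set.Ici q) < b := Subtype.mk_lt_mk.2 hcb
  exact h.2 hac' hcb'

end Aux

/-- **Statement 10.** Let `Q` be a finite uniform poset of length `l` with associated uniform
sequence `(P 0, P 1, ..., P l)`, where each `P i` (for `i ≤ l`) is a finite pure poset of
length `i` with a minimum element.  Purity of a finite poset of length `m` with minimum
element is encoded by a rank function `ρ` with `ρ ⊥ = 0`, increasing by `1` along covering
relations, and taking the value `m` at every maximal element.  Uniformity means that for
every `x ∈ Q` the upper order ideal `{y | y ≥ x}` is isomorphic to `P (l - ρQ x)`.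
For `i ≤ l`, the Whitney numbers of `P i` are
`w_k(P i) = Σ_{u : ρ u = k} μ(⊥, u)` (first kind: the coefficient of `x^{i-k}` in the
characteristic polynomial) and `W_k(P i) = #{u : ρ u = k}` (second kind).  Here each `μ i`
is the Möbius function of `P i`, characterized by `μ(x,x) = 1` and
`Σ_{x ≤ z ≤ y} μ(x,z) = 0` for `x < y`.  Then the `(l+1)×(l+1)` matrices
`[w_{i-j}(P i)]` and `[W_{i-j}(P i)]` (entries `0` when `j > i`) are inverse to each
other. -/
theorem stmt10 (l : ℕ)
    (Q : Type) [PartialOrder Q] [Fintype Q] [OrderBot Q]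
    (ρQ : Q → ℕ)
    (hρQbot : ρQ (⊥ : Q) = 0)
    (hρQcov : ∀ x y : Q, x ⋖ y → ρQ y = ρQ x + 1)
    (hQpure : ∀ x : Q, IsMax x → ρQ x = l)
    (P : ℕ → Type) [∀ i, PartialOrder (P i)] [∀ i, Fintype (P i)] [∀ i, OrderBot (P i)]
    (ρ : ∀ i, P i → ℕ)
    (hρbot : ∀ i ≤ l, ρ i (⊥ : P i) = 0)
    (hρcov : ∀ i ≤ l, ∀ x y : P i, x ⋖ y → ρ i y = ρ i x + 1)
    (hpure : ∀ i ≤ l, ∀ x : P i, IsMax x → ρ i x = i)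
    (huniform : ∀ x : Q, Nonempty ((Set.Ici x) ≃o P (l - ρQ x)))
    (μ : ∀ i, P i → P i → ℤ)
    (hμ_self : ∀ i ≤ l, ∀ x : P i, μ i x x = 1)
    (hμ_rec : ∀ i ≤ l, ∀ x y : P i, x < y →
      ∑ z ∈ Finset.univ.filter (fun z : P i => x ≤ z ∧ z ≤ y), μ i x z = 0) :
    let A : Matrix (Fin (l + 1)) (Fin (l + 1)) ℤ := Matrix.of fun i j =>
      if (j : ℕ) ≤ (i : ℕ) then
        ∑ u ∈ Finset.univ.filter (fun u : P (i : ℕ) => ρ (i : ℕ) u = (i : ℕ) - (j : ℕ)),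
          μ (i : ℕ) (⊥ : P (i : ℕ)) u
      else 0
    let B : Matrix (Fin (l + 1)) (Fin (l + 1)) ℤ := Matrix.of fun i j =>
      if (j : ℕ) ≤ (i : ℕ) then
        ((Finset.univ.filter
            (fun u : P (i : ℕ) => ρ (i : ℕ) u = (i : ℕ) - (j : ℕ))).card : ℤ)
      else 0
    A * B = 1 ∧ B * A = 1 := by
  intro A B
  have hAdef : A = Matrix.of fun (i j : Fin (l + 1)) =>
      if (j : ℕ) ≤ (i : ℕ) then
        ∑ u ∈ Finset.univ.filter (fun u : P (i : ℕ) => ρ (i : ℕ) u = (i : ℕ) - (j : ℕ)),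
          μ (i : ℕ) (⊥ : P (i : ℕ)) u
      else 0 := rfl
  have hBdef : B = Matrix.of fun (i j : Fin (l + 1)) =>
      if (j : ℕ) ≤ (i : ℕ) then
        ((Finset.univ.filter
            (fun u : P (i : ℕ) => ρ (i : ℕ) u = (i : ℕ) - (j : ℕ))).card : ℤ)
      else 0 := rfl
  -- basic facts about Q
  have hQmono : ∀ {x y : Q}, x ≤ y → ρQ x ≤ ρQ y :=
    fun h => aux_rank_mono ρQ hρQcov h
  have hsurj : ∀ t, t ≤ l → ∃ q : Q, ρQ q = t := by
    intro t ht
    obtain ⟨m, _, hmax⟩ := aux_exists_le_isMax (⊥ : Q)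
    obtain ⟨z, _, hz⟩ := aux_descend ρQ hρQbot hρQcov m t
      (by rw [hQpure m hmax]; exact ht)
    exact ⟨z, hz⟩
  have hrk : ∀ i, i ≤ l → ∀ x : P i, ρ i x ≤ i := by
    intro i hi x
    obtain ⟨m, hxm, hmax⟩ := aux_exists_le_isMax x
    have h1 := hpure i hi m hmax
    have h2 := aux_rank_mono (ρ i) (hρcov i hi) hxm
    omega
  -- the key uniformity counting lemma
  have key : ∀ i, i ≤ l → ∀ (x : P i) (r : ℕ),
      (Finset.univ.filter (fun y : P i => x ≤ y ∧ ρ i y = ρ i x + r)).card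
        = (Finset.univ.filter
            (fun u : P (i - ρ i x) => ρ (i - ρ i x) u = r)).card := by
    intro i hi x r
    obtain ⟨q, hq⟩ := hsurj (l - i) (by omega)
    obtain ⟨g⟩ := huniform q
    have hgi : l - ρQ q = i := by omega
    rw [hgi] at g
    set ρ' : Set.Ici q → ℕ := fun y => ρQ ↑y - ρQ q with hρ'
    have hρ'bot : ρ' ⊥ = 0 := by simp [hρ']
    have hρ'cov : ∀ a b : Set.Ici q, a ⋖ b → ρ' b = ρ' a + 1 := by
      intro a b hab
      have h1 := hρQcov _ _ (aux_Ici_covBy hab)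
      have h2 : ρQ q ≤ ρQ (a : Q) := hQmono a.2
      simp only [hρ']; omega
    have htrans : ∀ z : Set.Ici q, ρ i (g z) = ρ' z :=
      aux_transport ρ' (ρ i) hρ'bot (hρbot i hi) hρ'cov (hρcov i hi) g
    have hQP : ∀ y : P i, ρQ ((g.symm y : Set.Ici q) : Q) = ρQ q + ρ i y := by
      intro y
      have h1 := htrans (g.symm y)
      rw [g.apply_symm_apply] at h1
      have h2 : ρQ q ≤ ρQ ((g.symm y : Set.Ici q) : Q) := hQmono (g.symm y).2
      simp only [hρ'] at h1; omega
    set x' : Q := ((g.symm x : Set.Ici q) : Q) with hx'def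
    have hqx' : q ≤ x' := (g.symm x).2
    have hρx' : ρQ x' = ρQ q + ρ i x := hQP x
    obtain ⟨f⟩ := huniform x'
    have hrkx := hrk i hi x
    have hm : l - ρQ x' = i - ρ i x := by omega
    rw [hm] at f
    set ρ'' : Set.Ici x' → ℕ := fun z => ρQ ↑z - ρQ x' with hρ''
    have hρ''bot : ρ'' ⊥ = 0 := by simp [hρ'']
    have hρ''cov : ∀ a b : Set.Ici x', a ⋖ b → ρ'' b = ρ'' a + 1 := by
      intro a b hab
      have h1 := hρQcov _ _ (aux_Ici_covBy hab)
      have h2 : ρQ x' ≤ ρQ (a : Q) := hQmono a.2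
      simp only [hρ'']; omega
    have hmle : i - ρ i x ≤ l := by omega
    have htrans2 : ∀ z : Set.Ici x', ρ (i - ρ i x) (f z) = ρ'' z :=
      aux_transport ρ'' (ρ (i - ρ i x)) hρ''bot (hρbot _ hmle) hρ''cov (hρcov _ hmle) f
    have hmem1 : ∀ y : P i, x ≤ y → x' ≤ ((g.symm y : Set.Ici q) : Q) := by
      intro y hxy
      exact Subtype.coe_le_coe.2 (g.symm.monotone hxy)
    have hmem2 : ∀ u : P (i - ρ i x), q ≤ ((f.symm u : Set.Ici x') : Q) :=
      fun u => le_trans hqx' (f.symm u).2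
    refine Finset.card_bij'
      (fun y hy => f ⟨((g.symm y : Set.Ici q) : Q),
        hmem1 y (Finset.mem_filter.1 hy).2.1⟩)
      (fun u _ => g ⟨((f.symm u : Set.Ici x') : Q), hmem2 u⟩)
      ?_ ?_ ?_ ?_
    · intro y hy
      rw [Finset.mem_filter] at hy ⊢
      refine ⟨Finset.mem_univ _, ?_⟩
      rw [htrans2]
      show ρQ ((g.symm y : Set.Ici q) : Q) - ρQ x' = r
      have h1 := hQP y
      have h2 := hy.2.2
      omega
    · intro u hu
      rw [Finset.mem_filter] at hu ⊢
      have h3 := htrans2 (f.symm u)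
      rw [f.apply_symm_apply] at h3
      have h4 : ρQ x' ≤ ρQ ((f.symm u : Set.Ici x') : Q) := hQmono (f.symm u).2
      have h5 := hu.2
      refine ⟨Finset.mem_univ _, ?_, ?_⟩
      · have h1 : (g.symm x : Set.Ici q)
            ≤ (⟨((f.symm u : Set.Ici x') : Q), hmem2 u⟩ : Set.Ici q) := by
          rw [← Subtype.coe_le_coe]
          exact (f.symm u).2
        have h2 := g.monotone h1
        rwa [g.apply_symm_apply] at h2
      · rw [htrans]
        show ρQ ((f.symm u : Set.Ici x') : Q) - ρQ q = ρ i x + r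
        simp only [hρ''] at h3
        omega
    · intro y hy
      conv_rhs => rw [← g.apply_symm_apply y]
      refine congrArg g (Subtype.ext ?_)
      show ((f.symm (f ⟨((g.symm y : Set.Ici q) : Q),
          hmem1 y (Finset.mem_filter.1 hy).2.1⟩) : Set.Ici x') : Q)
        = ((g.symm y : Set.Ici q) : Q)
      rw [f.symm_apply_apply]
    · intro u hu
      conv_rhs => rw [← f.apply_symm_apply u]
      refine congrArg f (Subtype.ext ?_)
      show ((g.symm (g ⟨((f.symm u : Set.Ici x') : Q), hmem2 u⟩) : Set.Ici q) : Q)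
        = ((f.symm u : Set.Ici x') : Q)
      rw [g.symm_apply_apply]
  -- Möbius recursion
  have hmu : ∀ i, i ≤ l → ∀ y : P i,
      (∑ x ∈ Finset.univ.filter (fun x : P i => x ≤ y), μ i ⊥ x)
        = if y = ⊥ then 1 else 0 := by
    intro i hi y
    rcases eq_or_ne y ⊥ with rfl | hy
    · rw [if_pos rfl]
      have hs : Finset.univ.filter (fun x : P i => x ≤ (⊥ : P i)) = {⊥} := by
        ext z; simp [le_bot_iff]
      rw [hs, Finset.sum_singleton, hμ_self i hi]
    · rw [if_neg hy]
      have h1 := hμ_rec i hi ⊥ y (bot_lt_iff_ne_bot.2 hy)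
      have hs : Finset.univ.filter (fun z : P i => (⊥ : P i) ≤ z ∧ z ≤ y)
          = Finset.univ.filter (fun z : P i => z ≤ y) := by
        ext z; simp
      rwa [hs] at h1
  -- the core combinatorial identity
  have core : ∀ i j : ℕ, i ≤ l → j ≤ i →
      (∑ k ∈ Finset.Icc j i,
        (∑ u ∈ Finset.univ.filter (fun u : P i => ρ i u = i - k), μ i ⊥ u) *
          ((Finset.univ.filter (fun u : P k => ρ k u = k - j)).card : ℤ))
        = if i = j then 1 else 0 := by
    intro i j hi hj
    have step1 : ∀ k ∈ Finset.Icc j i,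
        (∑ u ∈ Finset.univ.filter (fun u : P i => ρ i u = i - k), μ i ⊥ u) *
          ((Finset.univ.filter (fun u : P k => ρ k u = k - j)).card : ℤ)
        = ∑ x ∈ Finset.univ.filter (fun x : P i => ρ i x = i - k),
            μ i ⊥ x *
              ((Finset.univ.filter
                (fun y : P i => x ≤ y ∧ ρ i y = i - j)).card : ℤ) := by
      intro k hk
      rw [Finset.mem_Icc] at hk
      rw [Finset.sum_mul]
      refine Finset.sum_congr rfl fun x hx => ?_
      rw [Finset.mem_filter] at hx
      have hx' := hx.2
      have hrx := hrk i hi x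
      congr 1
      have h1 : (Finset.univ.filter (fun y : P i => x ≤ y ∧ ρ i y = i - j))
          = (Finset.univ.filter
              (fun y : P i => x ≤ y ∧ ρ i y = ρ i x + (k - j))) := by
        ext y
        simp only [Finset.mem_filter, Finset.mem_univ, true_and]
        constructor
        · rintro ⟨h, h'⟩; exact ⟨h, by omega⟩
        · rintro ⟨h, h'⟩; exact ⟨h, by omega⟩
      rw [h1]
      have h2 := key i hi x (k - j)
      have h3 : i - ρ i x = k := by omega
      rw [h3] at h2
      rw [h2]
    rw [Finset.sum_congr rfl step1]
    have step2 : (∑ k ∈ Finset.Icc j i,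
        ∑ x ∈ Finset.univ.filter (fun x : P i => ρ i x = i - k),
          μ i ⊥ x *
            ((Finset.univ.filter
              (fun y : P i => x ≤ y ∧ ρ i y = i - j)).card : ℤ))
        = ∑ x : P i,
            μ i ⊥ x *
              ((Finset.univ.filter
                (fun y : P i => x ≤ y ∧ ρ i y = i - j)).card : ℤ) := by
      have hmap : ∀ x ∈ Finset.univ.filter (fun x : P i => ρ i x ≤ i - j),
          i - ρ i x ∈ Finset.Icc j i := by
        intro x hx
        rw [Finset.mem_filter] at hx
        have := hrk i hi x
        rw [Finset.mem_Icc]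
        omega
      have h0 := Finset.sum_fiberwise_of_maps_to hmap
        (fun x => μ i ⊥ x *
          ((Finset.univ.filter
            (fun y : P i => x ≤ y ∧ ρ i y = i - j)).card : ℤ))
      have h1 : ∀ k ∈ Finset.Icc j i,
          ((Finset.univ.filter (fun x : P i => ρ i x ≤ i - j)).filter
              (fun x => i - ρ i x = k))
            = Finset.univ.filter (fun x : P i => ρ i x = i - k) := by
        intro k hk
        rw [Finset.mem_Icc] at hk
        ext x
        have := hrk i hi x
        simp only [Finset.mem_filter, Finset.mem_univ, true_and]
        omega
      have h2 : (Finset.univ.filter (fun x : P i => ρ i x ≤ i - j)).sum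
            (fun x => μ i ⊥ x *
              ((Finset.univ.filter
                (fun y : P i => x ≤ y ∧ ρ i y = i - j)).card : ℤ))
          = ∑ x : P i,
              μ i ⊥ x *
                ((Finset.univ.filter
                  (fun y : P i => x ≤ y ∧ ρ i y = i - j)).card : ℤ) := by
        refine Finset.sum_filter_of_ne ?_
        intro x _ hne
        by_contra hgt
        apply hne
        have hempty : Finset.univ.filter (fun y : P i => x ≤ y ∧ ρ i y = i - j)
            = ∅ := by
          rw [Finset.filter_eq_empty_iff]
          rintro y - ⟨hxy, hry⟩
          have := aux_rank_mono (ρ i) (hρcov i hi) hxy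
          omega
        rw [hempty]
        simp
      rw [← h2, ← h0]
      exact Finset.sum_congr rfl fun k hk => by rw [h1 k hk]
    rw [step2]
    have h1 : ∀ x : P i,
        μ i ⊥ x *
            ((Finset.univ.filter
              (fun y : P i => x ≤ y ∧ ρ i y = i - j)).card : ℤ)
          = ∑ y ∈ Finset.univ.filter (fun y : P i => x ≤ y ∧ ρ i y = i - j),
              μ i ⊥ x := by
      intro x
      rw [Finset.sum_const, nsmul_eq_mul, mul_comm]
    simp only [h1]
    simp only [Finset.sum_filter]
    rw [Finset.sum_comm]
    have h2 : ∀ y : P i,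
        (∑ x : P i, if x ≤ y ∧ ρ i y = i - j then μ i ⊥ x else 0)
          = if ρ i y = i - j then (if y = ⊥ then (1 : ℤ) else 0) else 0 := by
      intro y
      by_cases hc : ρ i y = i - j
      · rw [if_pos hc]
        have heq : ∀ x : P i,
            (if x ≤ y ∧ ρ i y = i - j then μ i ⊥ x else 0)
              = if x ≤ y then μ i ⊥ x else 0 := fun x => by simp [hc]
        simp only [heq]
        rw [← Finset.sum_filter, hmu i hi y]
      · simp [hc]
    simp only [h2]
    rw [Finset.sum_eq_single (⊥ : P i)
      (fun b _ hb => by simp [hb])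
      (fun h => absurd (Finset.mem_univ _) h)]
    rw [hρbot i hi]
    simp only [if_pos rfl]
    split_ifs with ha hb hb
    · rfl
    · omega
    · omega
    · rfl
  -- assemble the matrix statement
  have hAB : A * B = 1 := by
    ext i j
    rw [Matrix.mul_apply, Matrix.one_apply]
    have hcalc : (∑ k : Fin (l + 1), A i k * B k j)
        = ∑ t ∈ Finset.range (l + 1),
            (if (j : ℕ) ≤ t ∧ t ≤ (i : ℕ) then
              (∑ u ∈ Finset.univ.filter
                  (fun u : P (i : ℕ) => ρ (i : ℕ) u = (i : ℕ) - t),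
                μ (i : ℕ) ⊥ u) *
              ((Finset.univ.filter
                  (fun u : P t => ρ t u = t - (j : ℕ))).card : ℤ)
            else 0) := by
      rw [← Fin.sum_univ_eq_sum_range]
      refine Finset.sum_congr rfl fun k _ => ?_
      rw [hAdef, hBdef]
      simp only [Matrix.of_apply]
      by_cases h1 : (k : ℕ) ≤ (i : ℕ) <;> by_cases h2 : (j : ℕ) ≤ (k : ℕ) <;>
        simp [h1, h2]
    rw [hcalc]
    have hfilter : Finset.filter (fun t => (j : ℕ) ≤ t ∧ t ≤ (i : ℕ))
        (Finset.range (l + 1)) = Finset.Icc (j : ℕ) (i : ℕ) := by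
      ext t
      simp only [Finset.mem_filter, Finset.mem_range, Finset.mem_Icc]
      have := i.isLt
      omega
    rw [← Finset.sum_filter, hfilter]
    rcases le_or_gt (j : ℕ) (i : ℕ) with h | h
    · rw [core (i : ℕ) (j : ℕ) (by have := i.isLt; omega) h]
      by_cases hij : i = j
      · rw [if_pos (by rw [hij]), if_pos hij]
      · rw [if_neg (fun hc => hij (Fin.ext hc)), if_neg hij]
    · rw [Finset.Icc_eq_empty (by omega), Finset.sum_empty,
        if_neg (fun hc => by subst hc; omega)]
  exact ⟨hAB, mul_eq_one_comm.mp hAB⟩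
end

section
/- For every n ≥ 1, the n×n matrices A and B over ℚ, with rows and columns indexed by 1,...,n, defined by A_{ij} = (-1)^{i-j}·C(i-1, j-1)·i^{i-j} and B_{ij} = C(i, j)·j^{i-j} for j ≤ i, and A_{ij} = B_{ij} = 0 for j > i, are inverses of each other: A·B = B·A = I. -/
open Finset

private lemma abel_sub (x y : ℚ) (d : ℕ) :
    ∑ t ∈ range (d + 1), (-1 : ℚ) ^ (d - t) * y ^ (d - t) * x ^ t * (Nat.choose d t : ℚ)
      = (x - y) ^ d := by
  rw [sub_eq_add_neg, add_pow]
  refine Finset.sum_congr rfl fun t ht => ?_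
  rw [neg_pow]
  ring

private lemma key (d k : ℕ) :
    ∑ t ∈ range (d + 1),
        (-1 : ℚ) ^ (d - t) * (Nat.choose (k + d) (k + t) : ℚ) *
          (((k + d + 1 : ℕ)) : ℚ) ^ (d - t) * (Nat.choose (k + t + 1) (k + 1) : ℚ) *
          (((k + 1 : ℕ)) : ℚ) ^ t
      = if d = 0 then 1 else 0 := by
  rcases d with _ | e
  · simp
  set d := e + 1 with hd
  have hsplit :
      (∑ t ∈ range (d + 1),
        (-1 : ℚ) ^ (d - t) * (Nat.choose (k + d) (k + t) : ℚ) *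
          (((k + d + 1 : ℕ)) : ℚ) ^ (d - t) * (Nat.choose (k + t + 1) (k + 1) : ℚ) *
          (((k + 1 : ℕ)) : ℚ) ^ t)
      = (∑ t ∈ range (d + 1),
          (-1 : ℚ) ^ (d - t) * (Nat.choose (k + d) (k + t) : ℚ) *
            (((k + d + 1 : ℕ)) : ℚ) ^ (d - t) * (Nat.choose (k + t) k : ℚ) *
            (((k + 1 : ℕ)) : ℚ) ^ t)
        + ∑ t ∈ range (d + 1),
          (-1 : ℚ) ^ (d - t) * (Nat.choose (k + d) (k + t) : ℚ) *
            (((k + d + 1 : ℕ)) : ℚ) ^ (d - t) * (Nat.choose (k + t) (k + 1) : ℚ) *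
            (((k + 1 : ℕ)) : ℚ) ^ t := by
    rw [← Finset.sum_add_distrib]
    refine Finset.sum_congr rfl fun t ht => ?_
    rw [Nat.choose_succ_succ (k + t) k]
    push_cast
    ring
  rw [hsplit]
  -- first sum
  have hS1 :
      (∑ t ∈ range (d + 1),
          (-1 : ℚ) ^ (d - t) * (Nat.choose (k + d) (k + t) : ℚ) *
            (((k + d + 1 : ℕ)) : ℚ) ^ (d - t) * (Nat.choose (k + t) k : ℚ) *
            (((k + 1 : ℕ)) : ℚ) ^ t)
      = (Nat.choose (k + d) k : ℚ) * (-(d : ℚ)) ^ d := by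
    have : ∀ t ∈ range (d + 1),
        (-1 : ℚ) ^ (d - t) * (Nat.choose (k + d) (k + t) : ℚ) *
            (((k + d + 1 : ℕ)) : ℚ) ^ (d - t) * (Nat.choose (k + t) k : ℚ) *
            (((k + 1 : ℕ)) : ℚ) ^ t
        = (Nat.choose (k + d) k : ℚ) *
            ((-1 : ℚ) ^ (d - t) * (((k + d + 1 : ℕ)) : ℚ) ^ (d - t) *
              (((k + 1 : ℕ)) : ℚ) ^ t * (Nat.choose d t : ℚ)) := by
      intro t ht
      have ht' : t ≤ d := Nat.lt_succ_iff.mp (Finset.mem_range.mp ht)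
      have htri := Nat.choose_mul (n := k + d) (k := k + t) (s := k)
        (Nat.le_add_right k t)
      simp only [Nat.add_sub_cancel_left, Nat.add_sub_cancel] at htri
      have htri' : ((Nat.choose (k + d) (k + t) * Nat.choose (k + t) k : ℕ) : ℚ)
          = ((Nat.choose (k + d) k * Nat.choose d t : ℕ) : ℚ) := by
        rw [htri]
      push_cast at htri'
      linear_combination ((-1:ℚ)^(d-t) * (((k+d+1:ℕ)):ℚ)^(d-t) * (((k+1:ℕ)):ℚ)^t) * htri'
    rw [Finset.sum_congr rfl this, ← Finset.mul_sum]
    congr 1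
    have := abel_sub (((k + 1 : ℕ)) : ℚ) (((k + d + 1 : ℕ)) : ℚ) d
    rw [this]
    congr 1
    push_cast
    ring
  -- second sum
  have hS2 :
      (∑ t ∈ range (d + 1),
          (-1 : ℚ) ^ (d - t) * (Nat.choose (k + d) (k + t) : ℚ) *
            (((k + d + 1 : ℕ)) : ℚ) ^ (d - t) * (Nat.choose (k + t) (k + 1) : ℚ) *
            (((k + 1 : ℕ)) : ℚ) ^ t)
      = (Nat.choose (k + d) (k + 1) : ℚ) * (((k + 1 : ℕ)) : ℚ) * (-(d : ℚ)) ^ e := by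
    rw [Finset.sum_range_succ']
    have h0 : (Nat.choose (k + 0) (k + 1) : ℚ) = 0 := by
      norm_cast
      exact Nat.choose_eq_zero_of_lt (Nat.lt_succ_self k)
    have hlast :
        (-1 : ℚ) ^ (d - 0) * (Nat.choose (k + d) (k + 0) : ℚ) *
            (((k + d + 1 : ℕ)) : ℚ) ^ (d - 0) * (Nat.choose (k + 0) (k + 1) : ℚ) *
            (((k + 1 : ℕ)) : ℚ) ^ 0 = 0 := by
      rw [h0]; ring
    rw [hlast, add_zero]
    have : ∀ s ∈ range (e + 1),
        (-1 : ℚ) ^ (d - (s + 1)) * (Nat.choose (k + d) (k + (s + 1)) : ℚ) *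
            (((k + d + 1 : ℕ)) : ℚ) ^ (d - (s + 1)) * (Nat.choose (k + (s + 1)) (k + 1) : ℚ) *
            (((k + 1 : ℕ)) : ℚ) ^ (s + 1)
        = (Nat.choose (k + d) (k + 1) : ℚ) * (((k + 1 : ℕ)) : ℚ) *
            ((-1 : ℚ) ^ (e - s) * (((k + d + 1 : ℕ)) : ℚ) ^ (e - s) *
              (((k + 1 : ℕ)) : ℚ) ^ s * (Nat.choose e s : ℚ)) := by
      intro s hs
      have hs' : s ≤ e := Nat.lt_succ_iff.mp (Finset.mem_range.mp hs)
      have hds : d - (s + 1) = e - s := by omega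
      have hki : k + (s + 1) = (k + 1) + s := by ring
      have htri := Nat.choose_mul (n := k + d) (k := k + (s + 1)) (s := k + 1)
        (by omega)
      have hsub1 : k + d - (k + 1) = e := by omega
      have hsub2 : k + (s + 1) - (k + 1) = s := by omega
      rw [hsub1, hsub2] at htri
      have htri' : ((Nat.choose (k + d) (k + (s + 1)) * Nat.choose (k + (s + 1)) (k + 1) : ℕ) : ℚ)
          = ((Nat.choose (k + d) (k + 1) * Nat.choose e s : ℕ) : ℚ) := by
        rw [htri]
      push_cast at htri'
      rw [hds]
      linear_combination ((-1:ℚ)^(e-s) * (((k+d+1:ℕ)):ℚ)^(e-s) * (((k+1:ℕ)):ℚ)^(s+1)) * htri'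
    rw [Finset.sum_congr rfl this, ← Finset.mul_sum]
    congr 1
    have := abel_sub (((k + 1 : ℕ)) : ℚ) (((k + d + 1 : ℕ)) : ℚ) e
    rw [this]
    congr 1
    push_cast
    ring
  rw [hS1, hS2]
  have hrel : (Nat.choose (k + d) (k + 1) : ℚ) * (((k + 1 : ℕ)) : ℚ)
      = (Nat.choose (k + d) k : ℚ) * (d : ℚ) := by
    have := Nat.choose_succ_right_eq (k + d) k
    rw [Nat.add_sub_cancel_left] at this
    have : ((Nat.choose (k + d) (k + 1) * (k + 1) : ℕ) : ℚ)
        = ((Nat.choose (k + d) k * d : ℕ) : ℚ) := by rw [this]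
    push_cast at this
    push_cast
    linarith [this]
  have hpow : (-(d : ℚ)) ^ d = (-(d : ℚ)) ^ e * (-(d : ℚ)) := by
    rw [hd, pow_succ]
  rw [hrel, hpow, if_neg (by omega : d ≠ 0)]
  ring

/-- **Statement 11.** For every `n ≥ 1`, the `n×n` matrices `A` and `B` over `ℚ` with rows
and columns indexed by `1,...,n` (here index `a : Fin n` represents `a+1`), defined by
`A_{ij} = (-1)^{i-j} C(i-1,j-1) i^{i-j}` and `B_{ij} = C(i,j) j^{i-j}` for `j ≤ i` and
`A_{ij} = B_{ij} = 0` for `j > i` (which is automatic, since the binomial coefficients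
vanish there), are inverses of each other. -/
theorem stmt11 (n : ℕ) (hn : 1 ≤ n) :
    let A : Matrix (Fin n) (Fin n) ℚ := Matrix.of fun i j =>
      if (j : ℕ) ≤ (i : ℕ) then
        (-1 : ℚ) ^ ((i : ℕ) - (j : ℕ)) * (Nat.choose (i : ℕ) (j : ℕ) : ℚ) *
          (((i : ℕ) + 1 : ℕ) : ℚ) ^ ((i : ℕ) - (j : ℕ))
      else 0
    let B : Matrix (Fin n) (Fin n) ℚ := Matrix.of fun i j =>
      if (j : ℕ) ≤ (i : ℕ) then
        (Nat.choose ((i : ℕ) + 1) ((j : ℕ) + 1) : ℚ) *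
          (((j : ℕ) + 1 : ℕ) : ℚ) ^ ((i : ℕ) - (j : ℕ))
      else 0
    A * B = 1 ∧ B * A = 1 := by
  intro A B
  have hAB : A * B = 1 := by
    ext i k
    rw [Matrix.mul_apply, Matrix.one_apply]
    simp only [A, B, Matrix.of_apply]
    rw [Fin.sum_univ_eq_sum_range (fun m =>
      (if m ≤ (i : ℕ) then
        (-1 : ℚ) ^ ((i : ℕ) - m) * (Nat.choose (i : ℕ) m : ℚ) *
          (((i : ℕ) + 1 : ℕ) : ℚ) ^ ((i : ℕ) - m) else 0) *
      (if (k : ℕ) ≤ m then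
        (Nat.choose (m + 1) ((k : ℕ) + 1) : ℚ) *
          (((k : ℕ) + 1 : ℕ) : ℚ) ^ (m - (k : ℕ)) else 0)) n]
    by_cases hki : (k : ℕ) ≤ (i : ℕ)
    · set g : ℕ → ℚ := fun m =>
        (if m ≤ (i : ℕ) then
          (-1 : ℚ) ^ ((i : ℕ) - m) * (Nat.choose (i : ℕ) m : ℚ) *
            (((i : ℕ) + 1 : ℕ) : ℚ) ^ ((i : ℕ) - m) else 0) *
        (if (k : ℕ) ≤ m then
          (Nat.choose (m + 1) ((k : ℕ) + 1) : ℚ) *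
            (((k : ℕ) + 1 : ℕ) : ℚ) ^ (m - (k : ℕ)) else 0) with hg
      have hsub : Finset.Ico (k : ℕ) ((i : ℕ) + 1) ⊆ Finset.range n := by
        intro m hm
        rw [Finset.mem_Ico] at hm
        rw [Finset.mem_range]
        exact lt_of_lt_of_le hm.2 (Nat.succ_le_of_lt i.isLt)
      have hzero : ∀ m ∈ Finset.range n, m ∉ Finset.Ico (k : ℕ) ((i : ℕ) + 1) → g m = 0 := by
        intro m _ hm
        rw [Finset.mem_Ico, not_and_or, not_le, not_lt] at hm
        rcases hm with hm | hm
        · rw [hg]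
          simp only [if_neg (not_le.mpr hm)]
          ring
        · rw [hg]
          simp only [if_neg (not_le.mpr (by omega : (i : ℕ) < m))]
          ring
      rw [← Finset.sum_subset hsub hzero]
      rw [Finset.sum_Ico_eq_sum_range]
      set d : ℕ := (i : ℕ) - (k : ℕ) with hdd
      have hik : (i : ℕ) = (k : ℕ) + d := by omega
      have hrange : (i : ℕ) + 1 - (k : ℕ) = d + 1 := by omega
      rw [hrange]
      have hterm : ∀ t ∈ range (d + 1), g ((k : ℕ) + t)
          = (-1 : ℚ) ^ (d - t) * (Nat.choose ((k : ℕ) + d) ((k : ℕ) + t) : ℚ) *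
              ((((k : ℕ) + d + 1 : ℕ)) : ℚ) ^ (d - t) *
              (Nat.choose ((k : ℕ) + t + 1) ((k : ℕ) + 1) : ℚ) *
              ((((k : ℕ) + 1 : ℕ)) : ℚ) ^ t := by
        intro t ht
        have ht' : t ≤ d := Nat.lt_succ_iff.mp (Finset.mem_range.mp ht)
        rw [hg]
        simp only
        rw [if_pos (by omega : (k : ℕ) + t ≤ (i : ℕ)),
          if_pos (Nat.le_add_right _ _)]
        have h1 : (i : ℕ) - ((k : ℕ) + t) = d - t := by omega
        have h2 : (k : ℕ) + t - (k : ℕ) = t := by omega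
        rw [h1, h2, hik]
        ring
      rw [Finset.sum_congr rfl hterm, key d (k : ℕ)]
      have : i = k ↔ d = 0 := by
        rw [Fin.ext_iff]; omega
      simp [this]
    · have : i ≠ k := by
        intro h; exact hki (le_of_eq (congrArg Fin.val h).symm)
      rw [if_neg this]
      refine Finset.sum_eq_zero fun m hm => ?_
      by_cases hmi : m ≤ (i : ℕ)
      · rw [if_neg (by omega : ¬ (k : ℕ) ≤ m)]
        ring
      · rw [if_neg hmi]
        ring
  exact ⟨hAB, mul_eq_one_comm.mp hAB⟩
end

section
/- For all n ≥ 1, the number of bicolored combs with leaf label set [n] is |Comb²_n| = n^{n-1}. -/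
/-- A bicolored binary tree with leaf labels from `α`: every internal node has a left and a
right child and carries a color (`true` = red, `false` = blue); leaves carry labels. -/
inductive CTree (α : Type) : Type
  | leaf : α → CTree α
  | node : Bool → CTree α → CTree α → CTree α

namespace CTree

variable {α : Type}

/-- The list of leaf labels, from left to right. -/
def leaves : CTree α → List α
  | .leaf a => [a]
  | .node _ l r => leaves l ++ leaves r

/-- The label of the leftmost leaf. -/
def firstLeaf : CTree α → α
  | .leaf a => a
  | .node _ l _ => firstLeaf l

/-- The smallest leaf label of a tree (the valency of its root). -/
def minLeaf [LinearOrder α] : CTree α → α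
  | .leaf a => a
  | .node _ l r => min (minLeaf l) (minLeaf r)

/-- Normalized: in every subtree, the leftmost leaf carries the smallest leaf label of
that subtree. -/
def Normalized [LinearOrder α] : CTree α → Prop
  | .leaf _ => True
  | .node _ l r => Normalized l ∧ Normalized r ∧
      ∀ x ∈ leaves l ++ leaves r, firstLeaf l ≤ x

/-- The comb coloring condition: every internal node whose right child is an internal node
is colored red (`true`) and its right child is colored blue (`false`). -/
def CombColor : CTree α → Prop
  | .leaf _ => True
  | .node c l r => CombColor l ∧ CombColor r ∧
      ∀ c' l' r', r = CTree.node c' l' r' → c = true ∧ c' = false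

/-- The number of red (`true`) internal nodes. -/
def redCount : CTree α → ℕ
  | .leaf _ => 0
  | .node c l r => redCount l + redCount r + (if c then 1 else 0)

/-- The leaves of `t` are labeled bijectively by the elements of `α`. -/
def IsLabeling [Fintype α] (t : CTree α) : Prop :=
  (leaves t).Nodup ∧ ∀ x : α, x ∈ leaves t

end CTree

open CTree

open Finset

namespace CombProof

attribute [local instance] Classical.propDecidable

section Numeric
open Polynomial

/-- Alternating finite-difference sum. -/
def Sfd (n p : ℕ) (x : ℤ) : ℤ := ∑ k ∈ range (n+1), (-1:ℤ)^k * (n.choose k : ℤ) * (x + k)^p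

lemma Sfd_succ (n p : ℕ) (x : ℤ) : Sfd (n+1) p x = Sfd n p x - Sfd n p (x+1) := by
  have h1 : Sfd n p x = ∑ j ∈ range n, (-1:ℤ)^(j+1) * (n.choose (j+1) : ℤ) * (x + (j+1 : ℕ))^p
      + (-1:ℤ)^0 * (n.choose 0 : ℤ) * (x + (0:ℕ))^p := by
    unfold Sfd; rw [Finset.sum_range_succ']
  have h2 : Sfd (n+1) p x = ∑ j ∈ range (n+1), (-1:ℤ)^(j+1) * ((n+1).choose (j+1) : ℤ) * (x + (j+1 : ℕ))^p
      + (-1:ℤ)^0 * (((n+1)).choose 0 : ℤ) * (x + (0:ℕ))^p := by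
    unfold Sfd; rw [Finset.sum_range_succ']
  have h3 : ∀ j, ((n+1).choose (j+1) : ℤ) = (n.choose j : ℤ) + (n.choose (j+1) : ℤ) := by
    intro j; rw [Nat.choose_succ_succ]; push_cast; ring
  have h4 : ∑ j ∈ range (n+1), (-1:ℤ)^(j+1) * (n.choose (j+1) : ℤ) * (x + (j+1 : ℕ))^p
      = ∑ j ∈ range n, (-1:ℤ)^(j+1) * (n.choose (j+1) : ℤ) * (x + (j+1 : ℕ))^p := by
    rw [Finset.sum_range_succ, Nat.choose_succ_self]; push_cast; ring
  have h5 : Sfd n p (x+1) = ∑ j ∈ range (n+1), (-1:ℤ)^j * (n.choose j : ℤ) * (x + (j+1:ℕ))^p := by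
    unfold Sfd
    apply Finset.sum_congr rfl
    intro j _
    congr 2
    push_cast; ring
  rw [h2, h1, h5]
  rw [Finset.sum_congr rfl (fun j _ => by rw [h3 j])]
  have : ∑ j ∈ range (n+1), (-1:ℤ)^(j+1) * ((n.choose j : ℤ) + (n.choose (j+1) : ℤ)) * (x + (j+1 : ℕ))^p
      = (∑ j ∈ range (n+1), (-1:ℤ)^(j+1) * (n.choose j : ℤ) * (x + (j+1 : ℕ))^p)
      + ∑ j ∈ range (n+1), (-1:ℤ)^(j+1) * (n.choose (j+1) : ℤ) * (x + (j+1 : ℕ))^p := by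
    rw [← Finset.sum_add_distrib]; apply Finset.sum_congr rfl; intro j _; ring
  rw [this, h4]
  have h6 : ∑ j ∈ range (n+1), (-1:ℤ)^(j+1) * (n.choose j : ℤ) * (x + (j+1 : ℕ))^p
      = - ∑ j ∈ range (n+1), (-1:ℤ)^j * (n.choose j : ℤ) * (x + (j+1:ℕ))^p := by
    rw [← Finset.sum_neg_distrib]; apply Finset.sum_congr rfl; intro j _; ring
  rw [h6]
  simp only [Nat.choose_zero_right, pow_zero, one_mul, Nat.cast_one]
  push_cast
  ring


lemma expand_pow (n : ℕ) (y : ℤ) : (y+1)^n - y^n = ∑ i ∈ range n, (n.choose i : ℤ) * y^i := by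
  have h := add_pow y 1 n
  simp only [one_pow, mul_one] at h
  rw [Finset.sum_range_succ] at h
  simp only [Nat.choose_self, Nat.cast_one, mul_one] at h
  rw [h, add_sub_cancel_right]
  apply Finset.sum_congr rfl
  intro i _
  ring

lemma Sfd_zero (n : ℕ) : ∀ p, p < n → ∀ x : ℤ, Sfd n p x = 0 := by
  induction n with
  | zero => intro p hp; omega
  | succ n ih =>
    intro p hp x
    rw [Sfd_succ]
    rcases Nat.lt_or_ge p n with h | h
    · rw [ih p h x, ih p h (x+1)]; ring
    · have hpn : p = n := by omega
      subst hpn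
      have h5 : Sfd p p (x+1) = ∑ k ∈ range (p+1), (-1:ℤ)^k * (p.choose k : ℤ) * ((x + k)+1)^p := by
        unfold Sfd
        apply Finset.sum_congr rfl
        intro j _
        ring_nf
      rw [h5]
      unfold Sfd
      rw [← Finset.sum_sub_distrib]
      have : ∀ k ∈ range (p+1), (-1:ℤ)^k * (p.choose k : ℤ) * (x + k)^p - (-1:ℤ)^k * (p.choose k : ℤ) * ((x + k)+1)^p
          = ∑ i ∈ range p, (p.choose i : ℤ) * (-((-1:ℤ)^k * (p.choose k : ℤ) * (x+k)^i)) := by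
        intro k _
        have e := expand_pow p (x + k)
        have : (x + (k:ℤ))^p - ((x + k)+1)^p = -∑ i ∈ range p, (p.choose i : ℤ) * (x+k)^i := by
          rw [← e]; ring
        calc (-1:ℤ)^k * (p.choose k : ℤ) * (x + k)^p - (-1:ℤ)^k * (p.choose k : ℤ) * ((x + k)+1)^p
            = (-1:ℤ)^k * (p.choose k : ℤ) * ((x + (k:ℤ))^p - ((x + k)+1)^p) := by ring
          _ = (-1:ℤ)^k * (p.choose k : ℤ) * (-∑ i ∈ range p, (p.choose i : ℤ) * (x+k)^i) := by rw [this]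
          _ = _ := by
                rw [mul_neg, Finset.mul_sum, ← Finset.sum_neg_distrib]
                apply Finset.sum_congr rfl; intro i _; ring
      rw [Finset.sum_congr rfl this, Finset.sum_comm]
      apply Finset.sum_eq_zero
      intro i hi
      have : ∑ k ∈ range (p+1), ((p.choose i : ℤ) * (-((-1:ℤ)^k * (p.choose k : ℤ) * (x+k)^i)))
          = -((p.choose i : ℤ) * Sfd p i x) := by
        unfold Sfd
        rw [Finset.mul_sum, ← Finset.sum_neg_distrib]
        apply Finset.sum_congr rfl; intro k _; ring
      rw [this, ih i (Finset.mem_range.mp hi) x]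
      ring

lemma choose_mul_sub (n k : ℕ) (hk : k ≤ n) :
    (n+1).choose k * (n+1-k) = (n+1) * n.choose k := by
  have hj : k ≤ n + 1 := by omega
  have h1 : (n+1).choose k = (n+1).choose ((n-k)+1) := by
    rw [← Nat.choose_symm hj]; congr 1; omega
  have h2 : (n+1) * n.choose (n-k) = (n+1).choose ((n-k)+1) * ((n-k)+1) :=
    Nat.add_one_mul_choose_eq n (n-k)
  have h3 : n.choose (n-k) = n.choose k := Nat.choose_symm hk
  have h4 : n + 1 - k = (n-k)+1 := by omega
  rw [h1, h4, ← h2, h3]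

/-- Abel summand. -/
def sA (x : ℤ) : ℕ → ℤ
  | 0 => 1
  | (k+1) => x * (x + (k:ℕ) + 1)^k

/-- Abel polynomial sum. -/
noncomputable def PA (n : ℕ) (x b : ℤ) : Polynomial ℤ :=
  ∑ k ∈ range (n+1), Polynomial.C ((n.choose k : ℤ) * sA x k)
    * (Polynomial.X + Polynomial.C (b + ((n - k : ℕ) : ℤ)))^(n - k)

lemma eval_PA (n : ℕ) (x b y : ℤ) :
    Polynomial.eval y (PA n x b)
      = ∑ k ∈ range (n+1), (n.choose k : ℤ) * sA x k * (y + b + ((n - k : ℕ) : ℤ))^(n-k) := by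
  unfold PA
  rw [Polynomial.eval_finset_sum]
  apply Finset.sum_congr rfl
  intro k _
  simp only [Polynomial.eval_mul, Polynomial.eval_pow, Polynomial.eval_add, Polynomial.eval_X,
    Polynomial.eval_C]
  ring

lemma eval_PA_special (n : ℕ) (x b : ℤ) (hn : 1 ≤ n) :
    Polynomial.eval (-(x + b + n)) (PA n x b) = 0 := by
  rw [eval_PA]
  have key : ∀ k ∈ range (n+1),
      (n.choose k : ℤ) * sA x k * (-(x + b + n) + b + ((n - k : ℕ) : ℤ))^(n-k)
      = x * (-1)^n * ((-1:ℤ)^k * (n.choose k : ℤ) * (x + k)^(n-1)) := by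
    intro k hk
    have hkn : k ≤ n := by simpa using Nat.lt_succ_iff.mp (Finset.mem_range.mp hk)
    have hcast : ((n - k : ℕ) : ℤ) = (n : ℤ) - k := by omega
    have harg : (-(x + b + n) + b + ((n - k : ℕ) : ℤ)) = -(x + k) := by rw [hcast]; ring
    rw [harg]
    have hneg : (-(x+k))^(n-k) = (-1:ℤ)^(n-k) * (x+k)^(n-k) := by
      rw [neg_pow]
    have hsign : (-1:ℤ)^(n-k) = (-1)^n * (-1)^k := by
      have : (-1:ℤ)^(n-k) * (-1)^k = (-1)^n := by
        rw [← pow_add]; congr 1; omega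
      have h2 : ((-1:ℤ)^k) * ((-1:ℤ)^k) = 1 := by
        rw [← pow_add, ← two_mul, pow_mul]; norm_num
      calc (-1:ℤ)^(n-k) = (-1:ℤ)^(n-k) * (((-1:ℤ)^k) * ((-1:ℤ)^k)) := by rw [h2]; ring
        _ = (-1)^n * (-1)^k := by rw [← mul_assoc, this]
    cases k with
    | zero =>
      simp only [sA]
      rw [hneg, hsign]
      have e : x^n = x^(n-1) * x := by
        rw [← pow_succ]
        congr 1
        omega
      simp only [Nat.cast_zero, add_zero, Nat.sub_zero, Nat.choose_zero_right, Nat.cast_one,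
        pow_zero]
      linear_combination ((-1:ℤ)^n) * e
    | succ j =>
      simp only [sA]
      rw [hneg, hsign]
      have : (x + ((j:ℕ):ℤ) + 1)^j * (x + ((j+1 : ℕ):ℤ))^(n-(j+1)) = (x + ((j+1:ℕ):ℤ))^(n-1) := by
        have e1 : (x + ((j:ℕ):ℤ) + 1) = (x + ((j+1 : ℕ):ℤ)) := by push_cast; ring
        rw [e1, ← pow_add]
        congr 1
        omega
      push_cast at this ⊢
      linear_combination ((n.choose (j+1) : ℤ) * x * (-1:ℤ)^n * (-1:ℤ)^(j+1)) * this
  rw [Finset.sum_congr rfl key, ← Finset.mul_sum]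
  have hs : ∑ k ∈ range (n+1), ((-1:ℤ)^k * (n.choose k : ℤ) * (x + k)^(n-1)) = 0 := by
    have := Sfd_zero n (n-1) (by omega) x
    unfold Sfd at this
    exact this
  rw [hs]
  ring

lemma derivative_PA (n : ℕ) (x b : ℤ) :
    Polynomial.derivative (PA (n+1) x b) = Polynomial.C ((n:ℤ)+1) * PA n x (b+1) := by
  unfold PA
  rw [Polynomial.derivative_sum]
  rw [Finset.sum_range_succ]
  have hlast : Polynomial.derivative (Polynomial.C (((n+1).choose (n+1) : ℤ) * sA x (n+1))
      * (Polynomial.X + Polynomial.C (b + (((n+1) - (n+1) : ℕ) : ℤ)))^((n+1)-(n+1))) = 0 := by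
    simp
  rw [hlast, add_zero, Finset.mul_sum]
  apply Finset.sum_congr rfl
  intro k hk
  have hkn : k ≤ n := by simpa using Nat.lt_succ_iff.mp (Finset.mem_range.mp hk)
  rw [Polynomial.derivative_C_mul, Polynomial.derivative_X_add_C_pow]
  have h1 : (n+1) - k = (n - k) + 1 := by omega
  have h2 : b + (((n+1) - k : ℕ) : ℤ) = (b+1) + ((n - k : ℕ) : ℤ) := by
    have : ((n+1) - k : ℕ) = (n-k) + 1 := by omega
    rw [this]; push_cast; ring
  rw [h2, h1]
  simp only [Nat.add_sub_cancel]
  have hnat : (n+1).choose k * ((n-k)+1) = (n+1) * n.choose k := by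
    have := choose_mul_sub n k hkn
    have h3 : n + 1 - k = (n-k)+1 := by omega
    rwa [h3] at this
  have hcoeff : (((n+1).choose k : ℤ) * sA x k) * (((n-k)+1 : ℕ) : ℤ)
      = ((n:ℤ)+1) * ((n.choose k : ℤ) * sA x k) := by
    calc (((n+1).choose k : ℤ) * sA x k) * (((n-k)+1 : ℕ) : ℤ)
        = (((n+1).choose k * ((n-k)+1) : ℕ) : ℤ) * sA x k := by push_cast; ring
      _ = (((n+1) * n.choose k : ℕ) : ℤ) * sA x k := by rw [hnat]
      _ = ((n:ℤ)+1) * ((n.choose k : ℤ) * sA x k) := by push_cast; ring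
  calc Polynomial.C (((n+1).choose k : ℤ) * sA x k)
        * (Polynomial.C (((n-k+1 : ℕ)) : ℤ) * (Polynomial.X + Polynomial.C (b + 1 + ((n-k : ℕ) : ℤ)))^(n-k))
      = Polynomial.C ((((n+1).choose k : ℤ) * sA x k) * (((n-k)+1 : ℕ) : ℤ))
        * (Polynomial.X + Polynomial.C (b + 1 + ((n-k : ℕ) : ℤ)))^(n-k) := by
        simp only [Polynomial.C_mul]; ring
    _ = Polynomial.C (((n:ℤ)+1) * ((n.choose k : ℤ) * sA x k))
        * (Polynomial.X + Polynomial.C (b + 1 + ((n-k : ℕ) : ℤ)))^(n-k) := by rw [hcoeff]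
    _ = Polynomial.C ((n:ℤ)+1) * (Polynomial.C ((n.choose k : ℤ) * sA x k)
        * (Polynomial.X + Polynomial.C (b + 1 + ((n-k : ℕ) : ℤ)))^(n-k)) := by
        simp only [Polynomial.C_mul]; ring

theorem abelP (n : ℕ) : ∀ x b : ℤ, PA n x b = (Polynomial.X + Polynomial.C (x + b + n))^n := by
  induction n with
  | zero =>
    intro x b
    unfold PA
    simp [sA]
  | succ n ih =>
    intro x b
    have hd : Polynomial.derivative (PA (n+1) x b - (Polynomial.X + Polynomial.C (x+b+(n+1)))^(n+1)) = 0 := by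
      rw [Polynomial.derivative_sub, derivative_PA, Polynomial.derivative_X_add_C_pow, ih x (b+1)]
      have : x + b + ((n:ℤ)+1) = x + (b+1) + n := by ring
      simp only [Nat.add_sub_cancel, Nat.cast_add, Nat.cast_one, this]
      ring
    have hdeg : (PA (n+1) x b - (Polynomial.X + Polynomial.C (x+b+(n+1)))^(n+1)).natDegree = 0 :=
      Polynomial.natDegree_eq_zero_of_derivative_eq_zero hd
    obtain ⟨a, ha⟩ := Polynomial.natDegree_eq_zero.mp hdeg
    have hsp := eval_PA_special (n+1) x b (by omega)
    push_cast at hsp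
    have heval := congrArg (Polynomial.eval (-(x + b + ((n:ℤ)+1)))) ha
    rw [Polynomial.eval_sub] at heval
    simp only [Polynomial.eval_C, Polynomial.eval_pow, Polynomial.eval_add, Polynomial.eval_X] at heval
    rw [hsp] at heval
    have hz : (-(x + b + ((n:ℤ)+1)) + (x + b + ((n:ℤ)+1))) = 0 := by ring
    rw [hz, zero_pow (by omega : n+1 ≠ 0)] at heval
    have ha0 : a = 0 := by rw [heval]; ring
    have hdiff : PA (n+1) x b - (Polynomial.X + Polynomial.C (x+b+((n:ℤ)+1)))^(n+1) = 0 := by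
      rw [← ha, ha0]; simp
    have := sub_eq_zero.mp hdiff
    rw [this]
    push_cast
    ring

lemma abelKey (N : ℕ) :
    (∑ j ∈ range N, N.choose (j+1) * j^j * (N-j)^(N-j-1)) + N^N = (N+1)^N := by
  have h := congrArg (Polynomial.eval (1:ℤ)) (abelP N (-1) 0)
  rw [eval_PA] at h
  simp only [Polynomial.eval_pow, Polynomial.eval_add, Polynomial.eval_X, Polynomial.eval_C] at h
  rw [Finset.sum_range_succ'] at h
  have hterm : ∀ j ∈ range N,
      (N.choose (j+1) : ℤ) * sA (-1) (j+1) * ((1:ℤ) + 0 + ((N-(j+1) : ℕ) : ℤ))^(N-(j+1))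
      = -(((N.choose (j+1) * j^j * (N-j)^(N-j-1) : ℕ)) : ℤ) := by
    intro j hj
    have hjN : j < N := Finset.mem_range.mp hj
    have e1 : sA (-1) (j+1) = -((j:ℤ)^j) := by
      show (-1 : ℤ) * ((-1) + (j:ℕ) + 1)^j = -((j:ℤ)^j)
      have : ((-1:ℤ) + (j:ℕ) + 1) = (j:ℤ) := by ring
      rw [this]; ring
    have e2 : ((1:ℤ) + 0 + ((N-(j+1) : ℕ) : ℤ)) = ((N-j : ℕ) : ℤ) := by omega
    have e3 : N - (j+1) = N-j-1 := by omega
    rw [e1, e2, e3]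
    push_cast
    ring
  rw [Finset.sum_congr rfl hterm] at h
  rw [Finset.sum_neg_distrib, ← Nat.cast_sum] at h
  have hs0 : sA (-1) 0 = 1 := rfl
  rw [hs0] at h
  simp only [Nat.choose_zero_right, Nat.cast_one, Nat.sub_zero, one_mul, mul_one] at h
  have hr : ((1:ℤ) + (-1 + 0 + (N:ℤ))) = (N:ℤ) := by ring
  rw [hr] at h
  have hr2 : ((1:ℤ) + 0 + (N:ℤ))^N = ((N:ℤ)+1)^N := by ring_nf
  rw [hr2] at h
  have hgoal : (((∑ j ∈ range N, N.choose (j+1) * j^j * (N-j)^(N-j-1)) + N^N : ℕ) : ℤ)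
      = (((N+1)^N : ℕ) : ℤ) := by
    rw [Nat.cast_add, Nat.cast_pow, Nat.cast_pow, Nat.cast_add, Nat.cast_one]
    linarith [h]
  exact_mod_cast hgoal

end Numeric

lemma firstLeaf_mem {α : Type} (t : CTree α) : firstLeaf t ∈ leaves t := by
  induction t with
  | leaf a => simp [leaves, firstLeaf]
  | node c l r ihl ihr => simp [leaves, firstLeaf]; left; exact ihl

lemma lastLeaf_mem' {α : Type} (t : CTree α) : leaves t ≠ [] := by
  induction t with
  | leaf a => simp [leaves]
  | node c l r ihl ihr =>
    show leaves l ++ leaves r ≠ []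
    intro h
    exact ihl (List.append_eq_nil_iff.mp h).1

lemma normalized_le {α : Type} [LinearOrder α] (t : CTree α) (h : Normalized t) :
    ∀ x ∈ leaves t, firstLeaf t ≤ x := by
  cases t with
  | leaf a => intro x hx; simp [leaves] at hx; simp [firstLeaf, hx]
  | node c l r => intro x hx; exact h.2.2 x (by simpa [leaves] using hx)

/-- combs over ℕ with prescribed leaf-label set -/
def IsComb (S : Finset ℕ) (t : CTree ℕ) : Prop :=
  (leaves t).Nodup ∧ (leaves t).toFinset = S ∧ Normalized t ∧ CombColor t

lemma finite_trees (n : ℕ) : ∀ (S : Finset ℕ), S.card ≤ n →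
    {t : CTree ℕ | (leaves t).Nodup ∧ (leaves t).toFinset ⊆ S}.Finite := by
  induction n with
  | zero =>
    intro S hS
    have : S = ∅ := Finset.card_eq_zero.mp (Nat.le_zero.mp hS)
    subst this
    apply Set.finite_empty.subset
    rintro t ⟨_, h2⟩
    exfalso
    have := firstLeaf_mem t
    have : firstLeaf t ∈ (leaves t).toFinset := List.mem_toFinset.mpr this
    have := h2 this
    simp at this
  | succ n ih =>
    intro S hS
    have hfin : ((CTree.leaf '' (S : Set ℕ)) ∪
      ⋃ x ∈ S, ⋃ y ∈ S, ⋃ c : Bool,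
        (fun p : CTree ℕ × CTree ℕ => CTree.node c p.1 p.2) ''
          (({t : CTree ℕ | (leaves t).Nodup ∧ (leaves t).toFinset ⊆ S.erase y}) ×ˢ
           ({t : CTree ℕ | (leaves t).Nodup ∧ (leaves t).toFinset ⊆ S.erase x}))).Finite := by
      apply Set.Finite.union
      · exact (S.finite_toSet).image _
      · apply Set.Finite.biUnion (S.finite_toSet)
        intro x hx
        apply Set.Finite.biUnion (S.finite_toSet)
        intro y hy
        apply Set.finite_iUnion
        intro c
        apply Set.Finite.image
        apply Set.Finite.prod
        · exact ih (S.erase y) (by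
            have := Finset.card_erase_of_mem (by exact_mod_cast hy)
            omega)
        · exact ih (S.erase x) (by
            have := Finset.card_erase_of_mem (by exact_mod_cast hx)
            omega)
    apply hfin.subset
    rintro t ⟨hnd, hsub⟩
    cases t with
    | leaf a =>
      left
      refine ⟨a, ?_, rfl⟩
      have : a ∈ (leaves (CTree.leaf a)).toFinset := by simp [leaves]
      exact_mod_cast hsub this
    | node c l r =>
      right
      have hmem : ∀ z, z ∈ leaves l ++ leaves r → z ∈ S := by
        intro z hz
        exact hsub (List.mem_toFinset.mpr (by simpa [leaves] using hz))
      have hx : firstLeaf l ∈ S := hmem _ (by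
        apply List.mem_append_left; exact firstLeaf_mem l)
      have hy : firstLeaf r ∈ S := hmem _ (by
        apply List.mem_append_right; exact firstLeaf_mem r)
      have hnd' : (leaves l ++ leaves r).Nodup := by simpa [leaves] using hnd
      have hdisj : ∀ z ∈ leaves l, z ∉ leaves r := by
        intro z hz
        exact (List.disjoint_of_nodup_append hnd') hz
      refine Set.mem_biUnion hx ?_
      refine Set.mem_biUnion hy ?_
      refine Set.mem_iUnion.mpr ⟨c, ?_⟩
      refine ⟨(l, r), ⟨⟨hnd'.of_append_left, ?_⟩, ⟨hnd'.of_append_right, ?_⟩⟩, rfl⟩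
      · intro z hz
        have hz' := List.mem_toFinset.mp hz
        refine Finset.mem_erase.mpr ⟨?_, hmem z (List.mem_append_left _ hz')⟩
        intro hzy
        exact hdisj z hz' (hzy ▸ firstLeaf_mem r)
      · intro z hz
        have hz' := List.mem_toFinset.mp hz
        refine Finset.mem_erase.mpr ⟨?_, hmem z (List.mem_append_right _ hz')⟩
        intro hzx
        exact hdisj (firstLeaf l) (firstLeaf_mem l) (by rwa [hzx] at hz')

lemma finite_comb (S : Finset ℕ) : {t : CTree ℕ | IsComb S t}.Finite := by
  apply (finite_trees S.card S le_rfl).subset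
  rintro t ⟨h1, h2, _, _⟩
  exact ⟨h1, by rw [h2]⟩

noncomputable def combFinset (S : Finset ℕ) : Finset (CTree ℕ) := (finite_comb S).toFinset

lemma mem_combFinset {S : Finset ℕ} {t : CTree ℕ} : t ∈ combFinset S ↔ IsComb S t :=
  Set.Finite.mem_toFinset _

def colorOf : CTree ℕ → Bool
  | .leaf _ => false
  | .node c _ _ => c

def leftT : CTree ℕ → CTree ℕ
  | .leaf a => .leaf a
  | .node _ l _ => l

def rightT : CTree ℕ → CTree ℕ
  | .leaf a => .leaf a
  | .node _ _ r => r

def lastLeaf : CTree ℕ → ℕ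
  | .leaf a => a
  | .node _ _ r => lastLeaf r

lemma lastLeaf_mem (t : CTree ℕ) : lastLeaf t ∈ leaves t := by
  induction t with
  | leaf a => simp [leaves, lastLeaf]
  | node c l r ihl ihr =>
    show lastLeaf (CTree.node c l r) ∈ leaves l ++ leaves r
    exact List.mem_append_right _ ihr

def GoodBlock (c : Bool) (r : CTree ℕ) : Prop :=
  ∀ c' l' r', r = CTree.node c' l' r' → c = true ∧ c' = false

def IsBlock (B : Finset ℕ) (p : Bool × CTree ℕ) : Prop :=
  IsComb B p.2 ∧ GoodBlock p.1 p.2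

lemma finite_block (B : Finset ℕ) : {p : Bool × CTree ℕ | IsBlock B p}.Finite := by
  apply (Set.Finite.prod (Set.finite_univ (α := Bool)) (finite_comb B)).subset
  rintro ⟨c, r⟩ ⟨h1, _⟩
  exact ⟨trivial, h1⟩

noncomputable def blockFinset (B : Finset ℕ) : Finset (Bool × CTree ℕ) :=
  (finite_block B).toFinset

lemma mem_blockFinset {B : Finset ℕ} {p : Bool × CTree ℕ} :
    p ∈ blockFinset B ↔ IsBlock B p := Set.Finite.mem_toFinset _

lemma isComb_nonempty {S : Finset ℕ} {t : CTree ℕ} (h : IsComb S t) : S.Nonempty :=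
  ⟨firstLeaf t, h.2.1 ▸ List.mem_toFinset.mpr (firstLeaf_mem t)⟩

lemma firstLeaf_min {S : Finset ℕ} {t : CTree ℕ} (h : IsComb S t) (hne : S.Nonempty) :
    firstLeaf t = S.min' hne := by
  obtain ⟨hnd, hts, hN, _⟩ := h
  apply le_antisymm
  · apply Finset.le_min'
    intro y hy
    exact normalized_le t hN y (List.mem_toFinset.mp (hts ▸ hy))
  · exact S.min'_le _ (hts ▸ List.mem_toFinset.mpr (firstLeaf_mem t))

lemma decompose {S : Finset ℕ} {c : Bool} {l r : CTree ℕ} (hne : S.Nonempty)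
    (h : IsComb S (CTree.node c l r)) :
    IsBlock ((leaves r).toFinset) (c, r) ∧ IsComb (S \ (leaves r).toFinset) l ∧
      (leaves r).toFinset ⊆ S.erase (S.min' hne) := by
  obtain ⟨hnd, hts, hN, hC⟩ := h
  have hnd' : (leaves l ++ leaves r).Nodup := hnd
  have hts' : (leaves l ++ leaves r).toFinset = S := hts
  obtain ⟨hNl, hNr, hle⟩ := hN
  obtain ⟨hCl, hCr, hgood⟩ := hC
  have hdisj : ∀ z ∈ leaves l, z ∉ leaves r := fun z hz => List.disjoint_of_nodup_append hnd' hz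
  have hmeml : ∀ z ∈ leaves l, z ∈ S := fun z hz =>
    hts' ▸ List.mem_toFinset.mpr (List.mem_append_left _ hz)
  have hmemr : ∀ z ∈ leaves r, z ∈ S := fun z hz =>
    hts' ▸ List.mem_toFinset.mpr (List.mem_append_right _ hz)
  have hfl_min : firstLeaf l = S.min' hne := by
    apply le_antisymm
    · apply Finset.le_min'
      intro y hy
      exact hle y (List.mem_toFinset.mp (hts' ▸ hy))
    · exact S.min'_le _ (hmeml _ (firstLeaf_mem l))
  have hBsub : (leaves r).toFinset ⊆ S.erase (S.min' hne) := by
    intro z hz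
    have hz' := List.mem_toFinset.mp hz
    refine Finset.mem_erase.mpr ⟨?_, hmemr z hz'⟩
    intro hzm
    have heq : l.firstLeaf = z := by rw [hfl_min, hzm]
    exact hdisj _ (firstLeaf_mem l) (heq ▸ hz')
  have htsl : (leaves l).toFinset = S \ (leaves r).toFinset := by
    ext z
    simp only [Finset.mem_sdiff, List.mem_toFinset]
    constructor
    · intro hz
      exact ⟨hmeml z hz, hdisj z hz⟩
    · rintro ⟨hzS, hzr⟩
      have : z ∈ leaves l ++ leaves r := List.mem_toFinset.mp (hts' ▸ hzS)
      rcases List.mem_append.mp this with h1 | h1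
      · exact h1
      · exact absurd h1 hzr
  exact ⟨⟨⟨hnd'.of_append_right, rfl, hNr, hCr⟩, hgood⟩,
    ⟨hnd'.of_append_left, htsl, hNl, hCl⟩, hBsub⟩

lemma compose {S B : Finset ℕ} (hne : S.Nonempty) {c : Bool} {l r : CTree ℕ}
    (hB : B ⊆ S.erase (S.min' hne)) (hbl : IsBlock B (c, r)) (hl : IsComb (S \ B) l) :
    IsComb S (CTree.node c l r) := by
  obtain ⟨⟨hndr, htsr, hNr, hCr⟩, hgood⟩ := hbl
  obtain ⟨hndl, htsl, hNl, hCl⟩ := hl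
  have hBS : B ⊆ S := hB.trans (Finset.erase_subset _ _)
  have hmB : S.min' hne ∉ B := by
    intro hmem
    exact absurd (Finset.mem_erase.mp (hB hmem)).1 (by simp)
  have hmeml : ∀ z ∈ leaves l, z ∈ S \ B := fun z hz => htsl ▸ List.mem_toFinset.mpr hz
  have hmemr : ∀ z ∈ leaves r, z ∈ B := fun z hz => htsr ▸ List.mem_toFinset.mpr hz
  have hdisj : (leaves l).Disjoint (leaves r) := by
    intro z hzl hzr
    exact (Finset.mem_sdiff.mp (hmeml z hzl)).2 (hmemr z hzr)
  have hfl : firstLeaf l = S.min' hne := by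
    apply le_antisymm
    · have hmS : S.min' hne ∈ S \ B := Finset.mem_sdiff.mpr ⟨S.min'_mem hne, hmB⟩
      exact normalized_le l hNl _ (List.mem_toFinset.mp (htsl ▸ hmS))
    · exact S.min'_le _ (Finset.mem_sdiff.mp (hmeml _ (firstLeaf_mem l))).1
  refine ⟨?_, ?_, ⟨hNl, hNr, ?_⟩, ⟨hCl, hCr, hgood⟩⟩
  · exact List.Nodup.append hndl hndr hdisj
  · show (leaves l ++ leaves r).toFinset = S
    rw [List.toFinset_append, htsl, htsr]
    exact Finset.sdiff_union_of_subset hBS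
  · intro x hx
    rw [hfl]
    rcases List.mem_append.mp hx with h1 | h1
    · exact S.min'_le _ (Finset.mem_sdiff.mp (hmeml _ h1)).1
    · exact S.min'_le _ (hBS (hmemr _ h1))

lemma isComb_leaf_iff {a : ℕ} {t : CTree ℕ} : IsComb {a} t ↔ t = CTree.leaf a := by
  constructor
  · intro h
    obtain ⟨hnd, hts, _, _⟩ := h
    cases t with
    | leaf b =>
      have : b ∈ ({a} : Finset ℕ) := hts ▸ List.mem_toFinset.mpr (by simp [leaves])
      simp at this
      rw [this]
    | node c l r =>
      exfalso
      have hnd' : (leaves l ++ leaves r).Nodup := hnd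
      have hts' : (leaves l ++ leaves r).toFinset = {a} := hts
      have h1 : firstLeaf l ∈ ({a} : Finset ℕ) :=
        hts' ▸ List.mem_toFinset.mpr (List.mem_append_left _ (firstLeaf_mem l))
      have h2 : firstLeaf r ∈ ({a} : Finset ℕ) :=
        hts' ▸ List.mem_toFinset.mpr (List.mem_append_right _ (firstLeaf_mem r))
      simp only [Finset.mem_singleton] at h1 h2
      have := List.disjoint_of_nodup_append hnd' (h1 ▸ firstLeaf_mem l)
      exact this (h2 ▸ firstLeaf_mem r)
  · rintro rfl
    exact ⟨by simp [leaves], by simp [leaves], trivial, trivial⟩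

lemma combFinset_singleton (a : ℕ) : combFinset {a} = {CTree.leaf a} := by
  ext t
  rw [mem_combFinset, isComb_leaf_iff, Finset.mem_singleton]

lemma isComb_node {S : Finset ℕ} {t : CTree ℕ} (h : IsComb S t) (h2 : 2 ≤ S.card) :
    t = CTree.node (colorOf t) (leftT t) (rightT t) := by
  cases t with
  | leaf a =>
    exfalso
    obtain ⟨_, hts, _, _⟩ := h
    have : ({a} : Finset ℕ) = S := by simpa [leaves] using hts
    rw [← this] at h2
    simp at h2
  | node c l r => rfl

lemma card_comb_rec (S : Finset ℕ) (hne : S.Nonempty) (h2 : 2 ≤ S.card) :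
    (combFinset S).card =
      ∑ B ∈ (S.erase (S.min' hne)).powerset,
        (blockFinset B).card * (combFinset (S \ B)).card := by
  have hmap : ∀ t ∈ combFinset S,
      (leaves (rightT t)).toFinset ∈ (S.erase (S.min' hne)).powerset := by
    intro t ht
    have hic := mem_combFinset.mp ht
    have hnode := isComb_node hic h2
    have hd := decompose hne (hnode ▸ hic)
    exact Finset.mem_powerset.mpr hd.2.2
  rw [Finset.card_eq_sum_card_fiberwise hmap]
  apply Finset.sum_congr rfl
  intro B hB
  have key : (Finset.filter (fun t => (leaves (rightT t)).toFinset = B) (combFinset S)).card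
      = ((blockFinset B) ×ˢ (combFinset (S \ B))).card := by
    apply Finset.card_bij' (i := fun t _ => ((colorOf t, rightT t), leftT t))
      (j := fun p _ => CTree.node p.1.1 p.2 p.1.2)
    · intro t ht
      obtain ⟨htS, hfib⟩ := Finset.mem_filter.mp ht
      have hic := mem_combFinset.mp htS
      have hnode := isComb_node hic h2
      have hd := decompose hne (hnode ▸ hic)
      refine Finset.mem_product.mpr ⟨?_, ?_⟩
      · exact mem_blockFinset.mpr (hfib ▸ hd.1)
      · exact mem_combFinset.mpr (hfib ▸ hd.2.1)
    · intro p hp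
      obtain ⟨hp1, hp2⟩ := Finset.mem_product.mp hp
      have hbl := mem_blockFinset.mp hp1
      have hl := mem_combFinset.mp hp2
      have hcomp := compose hne (Finset.mem_powerset.mp hB)
        (by exact hbl) (by exact hl)
      refine Finset.mem_filter.mpr ⟨mem_combFinset.mpr hcomp, ?_⟩
      show (leaves p.1.2).toFinset = B
      exact hbl.1.2.1
    · intro t ht
      obtain ⟨htS, _⟩ := Finset.mem_filter.mp ht
      exact (isComb_node (mem_combFinset.mp htS) h2).symm
    · intro p hp
      rfl
  rw [key, Finset.card_product]

lemma goodBlock_leaf (c : Bool) (a : ℕ) : GoodBlock c (CTree.leaf a) := by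
  intro c' l' r' h
  cases h

lemma blockFinset_card_one (b : ℕ) : (blockFinset {b}).card = 2 := by
  have : blockFinset {b} = {(true, CTree.leaf b), (false, CTree.leaf b)} := by
    ext p
    rw [mem_blockFinset]
    constructor
    · rintro ⟨h1, _⟩
      have := isComb_leaf_iff.mp h1
      rcases p with ⟨c, r⟩
      simp only at this
      subst this
      cases c <;> simp
    · intro hp
      simp only [Finset.mem_insert, Finset.mem_singleton] at hp
      rcases hp with rfl | rfl
      · exact ⟨isComb_leaf_iff.mpr rfl, goodBlock_leaf _ _⟩
      · exact ⟨isComb_leaf_iff.mpr rfl, goodBlock_leaf _ _⟩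
  rw [this]
  rw [Finset.card_insert_of_notMem (by simp), Finset.card_singleton]

lemma block_shape {B : Finset ℕ} (h2 : 2 ≤ B.card) {c : Bool} {r : CTree ℕ}
    (h : IsBlock B (c, r)) :
    r = CTree.node false (leftT r) (CTree.leaf (lastLeaf r)) ∧ c = true := by
  have hnode := isComb_node h.1 h2
  rcases r with a | ⟨c', l', r''⟩
  · exact absurd hnode (by simp [colorOf, leftT, rightT])
  · have hgood := h.2 c' l' r'' rfl
    rcases r'' with a | ⟨c2, l2, r2⟩
    · refine ⟨?_, hgood.1⟩
      show CTree.node c' l' (CTree.leaf a) = CTree.node false l' (CTree.leaf a)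
      rw [hgood.2]
    · exfalso
      have hC : CombColor (CTree.node c' l' (CTree.node c2 l2 r2)) := h.1.2.2.2
      obtain ⟨_, _, hg'⟩ := hC
      have := (hg' c2 l2 r2 rfl).1
      rw [hgood.2] at this
      exact Bool.noConfusion this

lemma blockFinset_card_big (B : Finset ℕ) (hne : B.Nonempty) (h2 : 2 ≤ B.card) :
    (blockFinset B).card = ∑ a ∈ B.erase (B.min' hne), (combFinset (B.erase a)).card := by
  have hmap : ∀ p ∈ blockFinset B, lastLeaf p.2 ∈ B.erase (B.min' hne) := by
    rintro ⟨c, r⟩ hp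
    have hbl := mem_blockFinset.mp hp
    obtain ⟨hshape, hc⟩ := block_shape h2 hbl
    have hic : IsComb B (CTree.node false (leftT r) (CTree.leaf (lastLeaf r))) :=
      hshape ▸ hbl.1
    have hd := (decompose hne hic).2.2
    have : (leaves (CTree.leaf (lastLeaf r))).toFinset = {lastLeaf r} := by simp [leaves]
    rw [this] at hd
    exact hd (Finset.mem_singleton_self _)
  rw [Finset.card_eq_sum_card_fiberwise hmap]
  apply Finset.sum_congr rfl
  intro a ha
  apply Finset.card_bij' (i := fun p _ => leftT p.2)
    (j := fun l' _ => ((true, CTree.node false l' (CTree.leaf a)) : Bool × CTree ℕ))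
  · rintro ⟨c, r⟩ hp
    obtain ⟨hpB, hfib⟩ := Finset.mem_filter.mp hp
    have hbl := mem_blockFinset.mp hpB
    obtain ⟨hshape, hc⟩ := block_shape h2 hbl
    simp only at hfib
    have hic : IsComb B (CTree.node false (leftT r) (CTree.leaf (lastLeaf r))) :=
      hshape ▸ hbl.1
    have hd := (decompose hne hic).2.1
    have hts : (leaves (CTree.leaf (lastLeaf r))).toFinset = {lastLeaf r} := by simp [leaves]
    rw [hts, hfib] at hd
    rw [← Finset.erase_eq] at hd
    exact mem_combFinset.mpr hd
  · intro l' hl'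
    have hic := mem_combFinset.mp hl'
    have haB : a ∈ B.erase (B.min' hne) := ha
    have hsub : ({a} : Finset ℕ) ⊆ B.erase (B.min' hne) := Finset.singleton_subset_iff.mpr haB
    have hbl : IsBlock {a} (false, CTree.leaf a) := ⟨isComb_leaf_iff.mpr rfl, goodBlock_leaf _ _⟩
    have hl2 : IsComb (B \ {a}) l' := by rwa [Finset.erase_eq] at hic
    have hcomp := compose hne hsub hbl hl2
    refine Finset.mem_filter.mpr ⟨mem_blockFinset.mpr ⟨hcomp, ?_⟩, rfl⟩
    intro c' l'' r'' h
    cases h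
    exact ⟨rfl, rfl⟩
  · rintro ⟨c, r⟩ hp
    obtain ⟨hpB, hfib⟩ := Finset.mem_filter.mp hp
    have hbl := mem_blockFinset.mp hpB
    obtain ⟨hshape, hc⟩ := block_shape h2 hbl
    simp only at hfib
    rw [hfib] at hshape
    simp only
    rw [hc, ← hshape]
  · intro l' _
    rfl

lemma blockFinset_empty : blockFinset ∅ = ∅ := by
  ext p
  rw [mem_blockFinset]
  simp only [Finset.notMem_empty, iff_false]
  rintro ⟨h1, _⟩
  obtain ⟨a, ha⟩ := isComb_nonempty h1
  exact absurd ha (by simp)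

theorem count_comb (n : ℕ) : ∀ S : Finset ℕ, S.card = n → S.Nonempty →
    (combFinset S).card = n ^ (n-1) := by
  induction n using Nat.strong_induction_on with
  | _ n ih =>
    intro S hcard hne
    rcases Nat.lt_or_ge n 2 with hn | hn
    · have hpos : 0 < S.card := Finset.card_pos.mpr hne
      have hn1 : n = 1 := by omega
      subst hn1
      obtain ⟨a, rfl⟩ := Finset.card_eq_one.mp hcard
      rw [combFinset_singleton]
      simp
    · have h2S : 2 ≤ S.card := hcard ▸ hn
      rw [card_comb_rec S hne h2S]
      set m := S.min' hne with hm
      set N := n - 1 with hN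
      have hNn : n = N + 1 := by omega
      have hN1 : 1 ≤ N := by omega
      have hTcard : (S.erase m).card = N := by
        rw [Finset.card_erase_of_mem (S.min'_mem hne), hcard]
      set g : ℕ → ℕ := fun k => (if k = 0 then 0 else
        (if k = 1 then 2 else (k-1)^(k-1)) * (n-k)^(n-k-1)) with hg
      have hterm : ∀ B ∈ (S.erase m).powerset,
          (blockFinset B).card * (combFinset (S \ B)).card = g B.card := by
        intro B hB
        have hBsub : B ⊆ S.erase m := Finset.mem_powerset.mp hB
        rcases Finset.eq_empty_or_nonempty B with rfl | hBne
        · rw [blockFinset_empty]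
          simp [hg]
        · have hBpos : 1 ≤ B.card := Finset.card_pos.mpr hBne
          have hBS : B ⊆ S := hBsub.trans (Finset.erase_subset _ _)
          have hBle : B.card ≤ N := by
            have := Finset.card_le_card hBsub
            omega
          have hsd : (S \ B).card = n - B.card := by
            rw [Finset.card_sdiff_of_subset hBS, hcard]
          have hsdne : (S \ B).Nonempty := by
            refine ⟨m, Finset.mem_sdiff.mpr ⟨S.min'_mem hne, ?_⟩⟩
            intro hmem
            exact absurd (Finset.mem_erase.mp (hBsub hmem)).1 (by simp)
          have hcsd : (combFinset (S \ B)).card = (n - B.card) ^ (n - B.card - 1) :=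
            ih (n - B.card) (by omega) (S \ B) hsd hsdne
          rcases Nat.lt_or_ge B.card 2 with hB1 | hB2
          · have hB1' : B.card = 1 := by omega
            obtain ⟨b, rfl⟩ := Finset.card_eq_one.mp hB1'
            rw [blockFinset_card_one, hcsd]
            simp only [hg, Finset.card_singleton]
            norm_num
          · have hbig := blockFinset_card_big B hBne hB2
            have hinner : ∀ a ∈ B.erase (B.min' hBne),
                (combFinset (B.erase a)).card = (B.card - 1)^(B.card - 2) := by
              intro a ha
              have haB : a ∈ B := Finset.mem_of_mem_erase ha
              have hec : (B.erase a).card = B.card - 1 := Finset.card_erase_of_mem haB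
              have hene : (B.erase a).Nonempty := by
                rw [← Finset.card_pos, hec]; omega
              have := ih (B.card - 1) (by omega) (B.erase a) hec hene
              rw [this]
              congr 1
            rw [hbig, Finset.sum_congr rfl hinner, Finset.sum_const,
              Finset.card_erase_of_mem (B.min'_mem hBne), smul_eq_mul]
            rw [hcsd]
            simp only [hg]
            have e1 : ¬ (B.card = 0) := by omega
            have e2 : ¬ (B.card = 1) := by omega
            rw [if_neg e1, if_neg e2]
            congr 1
            rw [← pow_succ']
            congr 1
            omega
      rw [Finset.sum_congr rfl hterm, Finset.sum_powerset]
      have hinner2 : ∀ j ∈ Finset.range ((S.erase m).card + 1),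
          ∑ B ∈ Finset.powersetCard j (S.erase m), g B.card = N.choose j * g j := by
        intro j _
        have : ∀ B ∈ Finset.powersetCard j (S.erase m), g B.card = g j := by
          intro B hB
          rw [(Finset.mem_powersetCard.mp hB).2]
        rw [Finset.sum_congr rfl this, Finset.sum_const, Finset.card_powersetCard, hTcard,
          smul_eq_mul]
      rw [Finset.sum_congr rfl hinner2, hTcard]
      have hsplit : ∀ i ∈ Finset.range N, N.choose (i+1) * g (i+1)
          = N.choose (i+1) * i^i * (N-i)^(N-i-1) + (if i = 0 then N^N else 0) := by
        intro i hi
        have hiN : i < N := Finset.mem_range.mp hi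
        rcases Nat.eq_zero_or_pos i with rfl | hipos
        · show N.choose 1 * g 1 = N.choose 1 * 0^0 * (N-0)^(N-0-1) + (if (0:ℕ) = 0 then N^N else 0)
          rw [if_pos rfl, Nat.choose_one_right, pow_zero, Nat.sub_zero, mul_one]
          have hg1 : g 1 = 2 * ((n-1))^((n-1)-1) := by
            simp only [hg]
            rw [if_neg (one_ne_zero), if_true]
          rw [hg1]
          have hNpow : N^N = N * N^(N-1) := by
            conv_rhs => rw [← pow_succ']
            congr 1
            omega
          rw [hNpow, ← hN]
          ring
        · have e0 : ¬ (i+1 = 0) := by omega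
          have e1 : ¬ (i+1 = 1) := by omega
          simp only [hg, if_neg e0, if_neg e1, if_neg (by omega : ¬ i = 0)]
          have e2 : i + 1 - 1 = i := by omega
          have e3 : n - (i+1) = N - i := by omega
          rw [e2, e3, add_zero, mul_assoc]
      rw [show N + 1 = (N+1) from rfl]
      rw [Finset.sum_range_succ']
      simp only [hg, if_pos rfl, mul_zero, add_zero]
      rw [Finset.sum_congr rfl hsplit, Finset.sum_add_distrib]
      rw [Finset.sum_ite_eq' (Finset.range N) 0 (fun _ => N^N)]
      rw [if_pos (Finset.mem_range.mpr (by omega))]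
      rw [abelKey N, hNn]

def mapT {α β : Type} (f : α → β) : CTree α → CTree β
  | .leaf a => .leaf (f a)
  | .node c l r => .node c (mapT f l) (mapT f r)

lemma leaves_mapT {α β : Type} (f : α → β) (t : CTree α) :
    leaves (mapT f t) = (leaves t).map f := by
  induction t with
  | leaf a => rfl
  | node c l r ihl ihr =>
    show leaves (mapT f l) ++ leaves (mapT f r) = (leaves l ++ leaves r).map f
    rw [ihl, ihr, List.map_append]

lemma firstLeaf_mapT {α β : Type} (f : α → β) (t : CTree α) :
    firstLeaf (mapT f t) = f (firstLeaf t) := by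
  induction t with
  | leaf a => rfl
  | node c l r ihl ihr => exact ihl

lemma normalized_mapT {α β : Type} [LinearOrder α] [LinearOrder β] (f : α → β)
    (hf : ∀ a b : α, f a ≤ f b ↔ a ≤ b) (t : CTree α) :
    Normalized (mapT f t) ↔ Normalized t := by
  induction t with
  | leaf a => exact Iff.rfl
  | node c l r ihl ihr =>
    show (Normalized (mapT f l) ∧ Normalized (mapT f r) ∧
        ∀ x ∈ leaves (mapT f l) ++ leaves (mapT f r), firstLeaf (mapT f l) ≤ x) ↔
      (Normalized l ∧ Normalized r ∧ ∀ x ∈ leaves l ++ leaves r, firstLeaf l ≤ x)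
    rw [ihl, ihr]
    apply and_congr Iff.rfl
    apply and_congr Iff.rfl
    rw [leaves_mapT, leaves_mapT, firstLeaf_mapT, ← List.map_append]
    constructor
    · intro h x hx
      have := h (f x) (List.mem_map_of_mem (f := f) hx)
      exact (hf _ _).mp this
    · intro h y hy
      obtain ⟨x, hx, rfl⟩ := List.mem_map.mp hy
      exact (hf _ _).mpr (h x hx)

lemma combColor_mapT {α β : Type} (f : α → β) (t : CTree α) :
    CombColor (mapT f t) ↔ CombColor t := by
  induction t with
  | leaf a => exact Iff.rfl
  | node c l r ihl ihr =>
    show (CombColor (mapT f l) ∧ CombColor (mapT f r) ∧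
        ∀ c' l' r', mapT f r = CTree.node c' l' r' → c = true ∧ c' = false) ↔ _
    rw [ihl, ihr]
    apply and_congr Iff.rfl
    apply and_congr Iff.rfl
    constructor
    · intro h c' l' r' heq
      exact h c' (mapT f l') (mapT f r') (by rw [heq]; rfl)
    · intro h c' l' r' heq
      cases r with
      | leaf a => cases heq
      | node c2 l2 r2 =>
        have : c2 = c' := by
          have : CTree.node c2 (mapT f l2) (mapT f r2) = CTree.node c' l' r' := heq
          cases this
          rfl
        obtain ⟨h1, h2⟩ := h c2 l2 r2 rfl
        exact ⟨h1, this ▸ h2⟩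

lemma mapT_mapT {α β γ : Type} (f : α → β) (g : β → γ) (t : CTree α) :
    mapT g (mapT f t) = mapT (g ∘ f) t := by
  induction t with
  | leaf a => rfl
  | node c l r ihl ihr =>
    show CTree.node c (mapT g (mapT f l)) (mapT g (mapT f r)) = _
    rw [ihl, ihr]
    rfl

lemma mapT_id' {α : Type} (f : α → α) (t : CTree α) (h : ∀ x ∈ leaves t, f x = x) :
    mapT f t = t := by
  induction t with
  | leaf a => exact congrArg CTree.leaf (h a (by simp [leaves]))
  | node c l r ihl ihr =>
    show CTree.node c (mapT f l) (mapT f r) = CTree.node c l r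
    rw [ihl (fun x hx => h x (List.mem_append_left _ hx)),
      ihr (fun x hx => h x (List.mem_append_right _ hx))]

lemma isLabeling_iff (n : ℕ) (t : CTree (Fin n)) :
    (IsLabeling t ∧ Normalized t ∧ CombColor t) ↔ IsComb (Finset.range n) (mapT Fin.val t) := by
  have hf : ∀ a b : Fin n, (Fin.val a ≤ Fin.val b) ↔ a ≤ b := fun a b => Fin.le_def.symm
  constructor
  · rintro ⟨⟨hnd, hall⟩, hN, hC⟩
    refine ⟨?_, ?_, ?_, ?_⟩
    · rw [leaves_mapT]
      exact hnd.map Fin.val_injective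
    · ext m
      rw [leaves_mapT, List.mem_toFinset, Finset.mem_range]
      constructor
      · intro hm
        obtain ⟨x, _, rfl⟩ := List.mem_map.mp hm
        exact x.isLt
      · intro hm
        exact List.mem_map.mpr ⟨⟨m, hm⟩, hall _, rfl⟩
    · exact (normalized_mapT _ hf t).mpr hN
    · exact (combColor_mapT _ t).mpr hC
  · rintro ⟨hnd, hts, hN, hC⟩
    refine ⟨⟨?_, ?_⟩, ?_, ?_⟩
    · rw [leaves_mapT] at hnd
      exact hnd.of_map _
    · intro x
      have h1 : (x : ℕ) ∈ Finset.range n := Finset.mem_range.mpr x.isLt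
      have h2 := List.mem_toFinset.mp (hts ▸ h1)
      rw [leaves_mapT] at h2
      obtain ⟨y, hy, hyx⟩ := List.mem_map.mp h2
      have : y = x := Fin.ext hyx
      exact this ▸ hy
    · exact (normalized_mapT _ hf t).mp hN
    · exact (combColor_mapT _ t).mp hC

end CombProof

open CombProof in
theorem stmt15' (n : ℕ) (hn : 1 ≤ n) :
    Nat.card {t : CTree (Fin n) // IsLabeling t ∧ Normalized t ∧ CombColor t}
      = n ^ (n - 1) := by
  classical
  set g : ℕ → Fin n := fun m => if h : m < n then ⟨m, h⟩ else ⟨0, hn⟩ with hgdef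
  have hinv : ∀ t' : CTree ℕ, IsComb (Finset.range n) t' → mapT Fin.val (mapT g t') = t' := by
    intro t' ht'
    rw [mapT_mapT]
    apply mapT_id'
    intro x hx
    have hxn : x < n := by
      have : x ∈ Finset.range n := ht'.2.1 ▸ List.mem_toFinset.mpr hx
      simpa using this
    show ((g x : Fin n) : ℕ) = x
    rw [hgdef]
    simp only
    rw [dif_pos hxn]
  have E : {t : CTree (Fin n) // IsLabeling t ∧ Normalized t ∧ CombColor t} ≃
      {t' : CTree ℕ // IsComb (Finset.range n) t'} :=
    { toFun := fun p => ⟨mapT Fin.val p.1, (isLabeling_iff n p.1).mp p.2⟩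
      invFun := fun p => ⟨mapT g p.1, by
        have h1 := hinv p.1 p.2
        apply (isLabeling_iff n (mapT g p.1)).mpr
        rw [h1]
        exact p.2⟩
      left_inv := fun p => Subtype.ext (by
        show mapT g (mapT Fin.val p.1) = p.1
        rw [mapT_mapT]
        apply mapT_id'
        intro x _
        show g (x : ℕ) = x
        rw [hgdef]
        simp only
        rw [dif_pos x.isLt])
      right_inv := fun p => Subtype.ext (hinv p.1 p.2) }
  rw [Nat.card_congr E]
  have h1 : Nat.card {t' : CTree ℕ // IsComb (Finset.range n) t'}
      = (combFinset (Finset.range n)).card := by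
    have e1 : Nat.card {t' : CTree ℕ // IsComb (Finset.range n) t'}
        = ({t' : CTree ℕ | IsComb (Finset.range n) t'}).ncard := Nat.card_coe_set_eq _
    rw [e1, Set.ncard_eq_toFinset_card _ (finite_comb _)]
    rfl
  rw [h1, count_comb n (Finset.range n) (Finset.card_range n)
    ⟨0, Finset.mem_range.mpr (by omega)⟩]

/-- **Statement 15.** For all `n ≥ 1`, the number of bicolored combs with leaf label set
`[n]` (normalized labeled bicolored binary trees satisfying the comb coloring condition)
is `n^{n-1}`. -/
theorem stmt15 (n : ℕ) (hn : 1 ≤ n) :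
    Nat.card {t : CTree (Fin n) // IsLabeling t ∧ Normalized t ∧ CombColor t}
      = n ^ (n - 1) := stmt15' n hn
end
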